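/- (Iwasawa decomposition for GL(n,ℝ).) For every n ≥ 1 and every invertible n×n real matrix g, there exist a unique upper triangular matrix x with all diagonal entries equal to 1, a unique diagonal matrix y with all diagonal entries strictly positive, and a unique orthogonal matrix k ∈ O(n,ℝ), such that g = x·y·k. -/

import Mathlib

open Matrix

namespace Iwasawa12

variable {n : ℕ}

lemma diag_mul_of_ut {M N : Matrix (Fin n) (Fin n) ℝ}
    (hM : ∀ i j : Fin n, j < i → M i j = 0) (hN : ∀ i j : Fin n, j < i → N i j = 0)
    (i : Fin n) : (M * N) i i = M i i * N i i := by
  rw [Matrix.mul_apply]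
  refine Finset.sum_eq_single i (fun j _ hj => ?_) (by simp)
  rcases lt_or_gt_of_ne hj with h | h
  · rw [hM i j h, zero_mul]
  · rw [hN j i h, mul_zero]

lemma ut_mul {M N : Matrix (Fin n) (Fin n) ℝ}
    (hM : ∀ i j : Fin n, j < i → M i j = 0) (hN : ∀ i j : Fin n, j < i → N i j = 0) :
    ∀ i j : Fin n, j < i → (M * N) i j = 0 := by
  have h := Matrix.BlockTriangular.mul (b := (id : Fin n → Fin n))
    (fun i j hij => hM i j hij) (fun i j hij => hN i j hij)
  exact fun i j hij => h hij

lemma ut_inv {M : Matrix (Fin n) (Fin n) ℝ} (hM : ∀ i j : Fin n, j < i → M i j = 0)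
    (h : IsUnit M.det) : ∀ i j : Fin n, j < i → M⁻¹ i j = 0 := by
  haveI := M.invertibleOfIsUnitDet h
  have h2 := Matrix.blockTriangular_inv_of_blockTriangular
    (b := (id : Fin n → Fin n)) (fun i j hij => hM i j hij)
  exact fun i j hij => h2 hij

lemma det_ut {M : Matrix (Fin n) (Fin n) ℝ} (hM : ∀ i j : Fin n, j < i → M i j = 0) :
    M.det = ∏ i, M i i :=
  Matrix.det_of_upperTriangular (fun i j hij => hM i j hij)

lemma ut_orth_eq_one {T : Matrix (Fin n) (Fin n) ℝ}
    (hT : ∀ i j : Fin n, j < i → T i j = 0) (hpos : ∀ i, 0 < T i i)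
    (horth : T * Tᵀ = 1) : T = 1 := by
  have hdet : IsUnit T.det := by
    have h := congrArg Matrix.det horth
    rw [Matrix.det_mul, Matrix.det_transpose, Matrix.det_one] at h
    exact IsUnit.of_mul_eq_one _ h
  have hinv : T⁻¹ = Tᵀ := Matrix.inv_eq_right_inv horth
  have hTinv := ut_inv hT hdet
  have hlower : ∀ i j : Fin n, j < i → T j i = 0 := by
    intro i j hij
    have h := hTinv i j hij
    rw [hinv] at h
    exact h
  ext i j
  rcases lt_trichotomy i j with h | h | h
  · rw [hlower j i h, Matrix.one_apply_ne (ne_of_lt h)]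
  · subst h
    have h1 : (T * Tᵀ) i i = T i i * T i i := by
      rw [Matrix.mul_apply]
      refine Finset.sum_eq_single i (fun k _ hk => ?_) (by simp)
      rcases lt_or_gt_of_ne hk with hlt | hlt
      · rw [hT i k hlt, zero_mul]
      · rw [hlower k i hlt, zero_mul]
    rw [horth, Matrix.one_apply_eq] at h1
    have : T i i = 1 := by nlinarith [hpos i]
    rw [this, Matrix.one_apply_eq]
  · rw [hT i j h, Matrix.one_apply_ne (ne_of_gt h)]

lemma diag_entry_pos {A : Matrix (Fin n) (Fin n) ℝ} (hA : A.det ≠ 0) (i : Fin n) :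
    0 < (A * Aᵀ) i i := by
  have h : (A * Aᵀ) i i = dotProduct (A i) (A i) := by
    simp [Matrix.mul_apply, dotProduct]
  rw [h]
  have hne : A i ≠ 0 := fun h0 =>
    hA (Matrix.det_eq_zero_of_row_eq_zero i (fun j => congrFun h0 j))
  have hnonneg : 0 ≤ dotProduct (A i) (A i) :=
    Finset.sum_nonneg fun j _ => mul_self_nonneg _
  rcases hnonneg.lt_or_eq with hlt | heq
  · exact hlt
  · exact absurd (dotProduct_self_eq_zero.mp heq.symm) hne

lemma posDef_self_mul_transpose {A : Matrix (Fin n) (Fin n) ℝ} (hA : IsUnit A.det) :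
    (A * Aᵀ).PosDef := by
  refine Matrix.posDef_iff_dotProduct_mulVec.mpr ⟨?_, ?_⟩
  · show (A * Aᵀ)ᴴ = A * Aᵀ
    rw [conjTranspose_eq_transpose_of_trivial, Matrix.transpose_mul, Matrix.transpose_transpose]
  · intro x hx
    have h : dotProduct (star x) ((A * Aᵀ) *ᵥ x) = dotProduct (Aᵀ *ᵥ x) (Aᵀ *ᵥ x) := by
      rw [star_trivial, ← Matrix.mulVec_mulVec, Matrix.dotProduct_mulVec, ← Matrix.mulVec_transpose]
    rw [h]
    have hne : Aᵀ *ᵥ x ≠ 0 := by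
      intro h0
      apply hx
      have hdet : IsUnit Aᵀ.det := by rwa [Matrix.det_transpose]
      have hinj : Function.Injective (Aᵀ.mulVec) :=
        Matrix.mulVec_injective_iff_isUnit.mpr ((Matrix.isUnit_iff_isUnit_det Aᵀ).mpr hdet)
      exact hinj (by simpa using h0)
    have hnonneg : 0 ≤ dotProduct (Aᵀ *ᵥ x) (Aᵀ *ᵥ x) :=
      Finset.sum_nonneg fun j _ => mul_self_nonneg _
    rcases hnonneg.lt_or_eq with hlt | heq
    · exact hlt
    · exact absurd (dotProduct_self_eq_zero.mp heq.symm) hne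


lemma unique_aux {x y k x' y' k' : Matrix (Fin n) (Fin n) ℝ}
    (hx1 : ∀ i, x i i = 1) (hx0 : ∀ i j : Fin n, j < i → x i j = 0)
    (hy : ∀ i, 0 < y i i) (hyd : ∀ i j : Fin n, i ≠ j → y i j = 0)
    (hk : k * kᵀ = 1)
    (hx1' : ∀ i, x' i i = 1) (hx0' : ∀ i j : Fin n, j < i → x' i j = 0)
    (hy' : ∀ i, 0 < y' i i) (hyd' : ∀ i j : Fin n, i ≠ j → y' i j = 0)
    (hk' : k' * k'ᵀ = 1)
    (heq : x * y * k = x' * y' * k') : x = x' ∧ y = y' ∧ k = k' := by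
  have hyD : y = Matrix.diagonal (fun i => y i i) := by
    ext i j
    rcases eq_or_ne i j with rfl | hij
    · simp
    · rw [hyd i j hij, Matrix.diagonal_apply_ne _ hij]
  have hyD' : y' = Matrix.diagonal (fun i => y' i i) := by
    ext i j
    rcases eq_or_ne i j with rfl | hij
    · simp
    · rw [hyd' i j hij, Matrix.diagonal_apply_ne _ hij]
  have hyut : ∀ i j : Fin n, j < i → y i j = 0 := fun i j hij => hyd i j (ne_of_gt hij)
  have hyut' : ∀ i j : Fin n, j < i → y' i j = 0 := fun i j hij => hyd' i j (ne_of_gt hij)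
  have hdetx : IsUnit x.det := by rw [det_ut hx0]; simp [hx1]
  have hdetx' : IsUnit x'.det := by rw [det_ut hx0']; simp [hx1']
  have hdety : IsUnit y.det := by
    rw [det_ut hyut]
    exact (Finset.prod_pos (fun i _ => hy i)).ne'.isUnit
  have hdety' : IsUnit y'.det := by
    rw [det_ut hyut']
    exact (Finset.prod_pos (fun i _ => hy' i)).ne'.isUnit
  have hkk : kᵀ * k = 1 := mul_eq_one_comm.mp hk
  have h2 : x * y = x' * y' * (k' * kᵀ) := by
    have h := congrArg (fun M => M * kᵀ) heq
    simp only [Matrix.mul_assoc, hk, Matrix.mul_one] at h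
    simpa [Matrix.mul_assoc] using h
  have hyinv' : y'⁻¹ = Matrix.diagonal (fun i => (y' i i)⁻¹) := by
    apply Matrix.inv_eq_right_inv
    have h1 : Matrix.diagonal (fun i => y' i i) * Matrix.diagonal (fun i => (y' i i)⁻¹) = 1 := by
      rw [Matrix.diagonal_mul_diagonal, ← Matrix.diagonal_one]
      exact congrArg Matrix.diagonal (funext fun i => mul_inv_cancel₀ (hy' i).ne')
    nth_rewrite 1 [hyD']
    exact h1
  set T := y'⁻¹ * (x'⁻¹ * (x * y)) with hTdef
  have hTval : T = k' * kᵀ := by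
    rw [hTdef, h2, Matrix.mul_assoc x' y' _, Matrix.nonsing_inv_mul_cancel_left _ _ hdetx',
      Matrix.nonsing_inv_mul_cancel_left _ _ hdety']
  have hdut : ∀ (f : Fin n → ℝ), ∀ i j : Fin n, j < i → Matrix.diagonal f i j = 0 :=
    fun f i j hij => Matrix.diagonal_apply_ne _ (ne_of_gt hij)
  have hyinvut : ∀ i j : Fin n, j < i → y'⁻¹ i j = 0 := by
    rw [hyinv']; exact hdut _
  have hxinvut' := ut_inv hx0' hdetx'
  have hTut : ∀ i j : Fin n, j < i → T i j = 0 :=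
    ut_mul hyinvut (ut_mul hxinvut' (ut_mul hx0 hyut))
  have hxinvdiag : ∀ i, x'⁻¹ i i = 1 := by
    intro i
    have h := diag_mul_of_ut hxinvut' hx0' i
    rw [Matrix.nonsing_inv_mul _ hdetx', Matrix.one_apply_eq, hx1' i, mul_one] at h
    exact h.symm
  have hTpos : ∀ i, 0 < T i i := by
    intro i
    rw [hTdef, diag_mul_of_ut hyinvut (ut_mul hxinvut' (ut_mul hx0 hyut)) i,
      diag_mul_of_ut hxinvut' (ut_mul hx0 hyut) i, diag_mul_of_ut hx0 hyut i,
      hxinvdiag i, hx1 i, hyinv', Matrix.diagonal_apply_eq]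
    simp only [one_mul]
    exact mul_pos (inv_pos.mpr (hy' i)) (hy i)
  have hTorth : T * Tᵀ = 1 := by
    rw [hTval, Matrix.transpose_mul, Matrix.transpose_transpose]
    calc k' * kᵀ * (k * k'ᵀ) = k' * (kᵀ * k) * k'ᵀ := by simp only [Matrix.mul_assoc]
      _ = 1 := by rw [hkk, Matrix.mul_one, hk']
  have hT1 : T = 1 := ut_orth_eq_one hTut hTpos hTorth
  have hkeq : k' = k := by
    have h := congrArg (fun M => M * k) (hTval.symm.trans hT1)
    simp only [Matrix.mul_assoc, hkk, Matrix.mul_one, Matrix.one_mul] at h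
    exact h
  have hxy : x * y = x' * y' := by
    have h : x' * (y' * T) = x' * y' := by rw [hT1, Matrix.mul_one]
    rw [hTdef, Matrix.mul_nonsing_inv_cancel_left _ _ hdety',
      Matrix.mul_nonsing_inv_cancel_left _ _ hdetx'] at h
    exact h
  have hyy : y = y' := by
    have hdiag : ∀ i, y i i = y' i i := by
      intro i
      have h1 : (x * y) i i = y i i := by rw [diag_mul_of_ut hx0 hyut i, hx1 i, one_mul]
      have h2 : (x' * y') i i = y' i i := by rw [diag_mul_of_ut hx0' hyut' i, hx1' i, one_mul]
      rw [← h1, ← h2, hxy]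
    rw [hyD, hyD']
    exact congrArg Matrix.diagonal (funext fun i => hdiag i)
  have hxx : x = x' := by
    rw [hyy] at hxy
    have h := congrArg (fun M => M * y'⁻¹) hxy
    simp only [Matrix.mul_nonsing_inv_cancel_right _ _ hdety'] at h
    exact h
  exact ⟨hxx, hyy, hkeq.symm⟩


lemma inv_irrel {m : Type*} [Fintype m] (h1 h2 : DecidableEq m) (M : Matrix m m ℝ) :
    @Inv.inv _ (@Matrix.inv m ℝ _ h1 _) M = @Inv.inv _ (@Matrix.inv m ℝ _ h2 _) M := by
  rw [Subsingleton.elim h1 h2]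

end Iwasawa12

open Iwasawa12

set_option maxHeartbeats 1000000

/-- Iwasawa decomposition for `GL(n,ℝ)`: for every `n ≥ 1` and every
invertible `n×n` real matrix `g`, there exist a unique upper triangular matrix `x` with
unit diagonal, a unique diagonal matrix `y` with strictly positive diagonal entries, and
a unique orthogonal matrix `k` (i.e. `k·kᵀ = 1`), such that `g = x·y·k`. -/
theorem first_coeff_stmt12 (n : ℕ) (hn : 1 ≤ n)
    (g : Matrix (Fin n) (Fin n) ℝ) (hg : IsUnit g.det) :
    ∃! xyk : Matrix (Fin n) (Fin n) ℝ × Matrix (Fin n) (Fin n) ℝ × Matrix (Fin n) (Fin n) ℝ,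
      (∀ i, xyk.1 i i = 1) ∧ (∀ i j : Fin n, j < i → xyk.1 i j = 0) ∧
      (∀ i, 0 < xyk.2.1 i i) ∧ (∀ i j : Fin n, i ≠ j → xyk.2.1 i j = 0) ∧
      xyk.2.2 * xyk.2.2ᵀ = 1 ∧
      g = xyk.1 * xyk.2.1 * xyk.2.2 := by
  classical
  haveI : WellFoundedLT (Fin n) := inferInstance
  obtain ⟨σ, hσ⟩ : ∃ σ : Equiv.Perm (Fin n), σ = Fin.revPerm := ⟨_, rfl⟩
  obtain ⟨g', hg'def⟩ : ∃ g' : Matrix (Fin n) (Fin n) ℝ, g' = g.submatrix σ id := ⟨_, rfl⟩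
  have hdetg' : IsUnit g'.det := by
    rw [hg'def, Matrix.det_permute]
    rcases Int.units_eq_one_or (Equiv.Perm.sign σ) with h | h <;> rw [h] <;>
      simp [hg.ne_zero]
  have hS' : (g' * g'ᵀ).PosDef := posDef_self_mul_transpose hdetg'
  have hlowD : LDL.lower hS' = (LDL.lowerInv hS')⁻¹ := by
    unfold LDL.lower; exact inv_irrel _ _ _
  have hdiagD : LDL.diag hS' = Matrix.diagonal (LDL.diagEntries hS') := by
    unfold LDL.diag; congr!
  obtain ⟨L, hLdef⟩ : ∃ L : Matrix (Fin n) (Fin n) ℝ, L = LDL.lower hS' := ⟨_, rfl⟩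
  have hconj : L * LDL.diag hS' * Lᴴ = g' * g'ᵀ := by
    rw [hLdef]; exact LDL.lower_conj_diag hS'
  have hdetS' : (0:ℝ) < (g' * g'ᵀ).det := hS'.det_pos
  have hdetL : IsUnit L.det := by
    have hdet := congrArg Matrix.det hconj
    rw [Matrix.det_mul, Matrix.det_mul] at hdet
    refine isUnit_iff_ne_zero.mpr fun h0 => hdetS'.ne' ?_
    rw [← hdet, h0, zero_mul, zero_mul]
  have hdetLinv : IsUnit (LDL.lowerInv hS').det := by
    by_contra hcon
    rw [hLdef, hlowD, Matrix.nonsing_inv_apply_not_isUnit _ hcon,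
      @Matrix.det_zero _ _ _ _ _ ⟨⟨0, hn⟩⟩] at hdetL
    exact hdetL.ne_zero rfl
  haveI := (LDL.lowerInv hS').invertibleOfIsUnitDet hdetLinv
  have hLinvT : (LDL.lowerInv hS').BlockTriangular OrderDual.toDual :=
    fun i j hij => LDL.lowerInv_triangular hS' (OrderDual.toDual_lt_toDual.mp hij)
  have hLT : L.BlockTriangular OrderDual.toDual := by
    rw [hLdef, hlowD]
    exact Matrix.blockTriangular_inv_of_blockTriangular hLinvT
  obtain ⟨L', hL'def⟩ : ∃ L' : Matrix (Fin n) (Fin n) ℝ, L' = L.submatrix σ σ := ⟨_, rfl⟩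
  have hL'ut : ∀ i j : Fin n, j < i → L' i j = 0 := by
    intro i j hij
    have h1 : σ i < σ j := by simp [hσ, hij]
    rw [hL'def]
    exact hLT (OrderDual.toDual_lt_toDual.mpr h1)
  obtain ⟨d, hd_def⟩ : ∃ d : Fin n → ℝ, d = fun i => L' i i := ⟨_, rfl⟩
  have hdetL' : IsUnit L'.det := by
    rw [hL'def, Matrix.det_submatrix_equiv_self]
    exact hdetL
  have hd : ∀ i, d i ≠ 0 := by
    intro i h0
    rw [det_ut hL'ut] at hdetL'
    rw [hd_def] at h0
    exact hdetL'.ne_zero (Finset.prod_eq_zero (Finset.mem_univ i) h0)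
  obtain ⟨ediag, he_def⟩ : ∃ e : Fin n → ℝ, e = fun i => LDL.diagEntries hS' (σ i) := ⟨_, rfl⟩
  have hW : LDL.diag hS' = (LDL.lowerInv hS' * g') * (LDL.lowerInv hS' * g')ᵀ := by
    rw [LDL.diag_eq_lowerInv_conj, Matrix.conjTranspose_eq_transpose_of_trivial,
      Matrix.transpose_mul]
    simp only [Matrix.mul_assoc]
  have hdetW : (LDL.lowerInv hS' * g').det ≠ 0 := by
    rw [Matrix.det_mul]
    exact mul_ne_zero hdetLinv.ne_zero hdetg'.ne_zero
  have he : ∀ i, 0 < ediag i := by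
    intro i
    have h := diag_entry_pos hdetW (σ i)
    rw [← hW] at h
    have h2 : LDL.diag hS' (σ i) (σ i) = ediag i := by
      rw [hdiagD, Matrix.diagonal_apply_eq, he_def]
    rwa [h2] at h
  obtain ⟨x, hx_def⟩ : ∃ x : Matrix (Fin n) (Fin n) ℝ,
    x = L' * Matrix.diagonal (fun i => (d i)⁻¹) := ⟨_, rfl⟩
  have hdut : ∀ (f : Fin n → ℝ), ∀ i j : Fin n, j < i → Matrix.diagonal f i j = 0 :=
    fun f i j hij => Matrix.diagonal_apply_ne _ (ne_of_gt hij)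
  have hx1 : ∀ i, x i i = 1 := by
    intro i
    rw [hx_def, Matrix.mul_diagonal, show L' i i = d i from by rw [hd_def]]
    exact mul_inv_cancel₀ (hd i)
  have hxut : ∀ i j : Fin n, j < i → x i j = 0 := by
    rw [hx_def]; exact ut_mul hL'ut (hdut _)
  obtain ⟨y, hy_def⟩ : ∃ y : Matrix (Fin n) (Fin n) ℝ,
    y = Matrix.diagonal (fun i => |d i| * Real.sqrt (ediag i)) := ⟨_, rfl⟩
  have hypos : ∀ i, 0 < y i i := by
    intro i
    rw [hy_def, Matrix.diagonal_apply_eq]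
    exact mul_pos (abs_pos.mpr (hd i)) (Real.sqrt_pos.mpr (he i))
  have hyoff : ∀ i j : Fin n, i ≠ j → y i j = 0 := by
    intro i j hij
    rw [hy_def]
    exact Matrix.diagonal_apply_ne _ hij
  have hdety : IsUnit y.det := by
    rw [det_ut (fun i j hij => hyoff i j (ne_of_gt hij))]
    exact (Finset.prod_pos fun i _ => hypos i).ne'.isUnit
  have hdetx : IsUnit x.det := by rw [det_ut hxut]; simp [hx1]
  have hDsub : (LDL.diag hS').submatrix σ σ = Matrix.diagonal ediag := by
    ext i j
    rcases eq_or_ne i j with rfl | hij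
    · simp [hdiagD, he_def]
    · have h1 : σ i ≠ σ j := fun h => hij (σ.injective h)
      simp [hdiagD, Matrix.diagonal_apply_ne _ h1, Matrix.diagonal_apply_ne _ hij]
  have hsub1 : g * gᵀ = (g' * g'ᵀ).submatrix σ σ := by
    ext i j
    simp [hg'def, Matrix.mul_apply, hσ]
  have hLH : Lᴴ = Lᵀ := Matrix.conjTranspose_eq_transpose_of_trivial _
  have hkey0 : g * gᵀ = L' * Matrix.diagonal ediag * L'ᵀ := by
    rw [hsub1, ← hconj, hLH, Matrix.mul_assoc,
      ← Matrix.submatrix_mul_equiv L (LDL.diag hS' * Lᵀ) σ σ σ,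
      ← Matrix.submatrix_mul_equiv (LDL.diag hS') Lᵀ σ σ σ,
      hDsub, ← Matrix.transpose_submatrix, ← hL'def, Matrix.mul_assoc]
  have hyy : y * y = Matrix.diagonal (fun i => d i * d i * ediag i) := by
    rw [hy_def, Matrix.diagonal_mul_diagonal]
    exact congrArg _ (funext fun i => by
      rw [mul_mul_mul_comm, abs_mul_abs_self, Real.mul_self_sqrt (he i).le])
  have hmid : Matrix.diagonal (fun i => (d i)⁻¹) *
      (Matrix.diagonal (fun i => d i * d i * ediag i) * Matrix.diagonal (fun i => (d i)⁻¹)) =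
      Matrix.diagonal ediag := by
    rw [Matrix.diagonal_mul_diagonal, Matrix.diagonal_mul_diagonal]
    refine congrArg _ (funext fun i => ?_)
    show (d i)⁻¹ * (d i * d i * ediag i * (d i)⁻¹) = ediag i
    field_simp
    rw [mul_div_right_comm, div_self (hd i), one_mul]
  have hkey : g * gᵀ = x * (y * y) * xᵀ := by
    rw [hkey0, hyy, hx_def, Matrix.transpose_mul, Matrix.diagonal_transpose]
    calc L' * Matrix.diagonal ediag * L'ᵀ
        = L' * (Matrix.diagonal ediag * L'ᵀ) := by rw [Matrix.mul_assoc]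
      _ = L' * (Matrix.diagonal (fun i => (d i)⁻¹) *
            (Matrix.diagonal (fun i => d i * d i * ediag i) *
              (Matrix.diagonal (fun i => (d i)⁻¹) * L'ᵀ))) := by
          rw [← hmid]
          simp only [Matrix.mul_assoc]
      _ = L' * Matrix.diagonal (fun i => (d i)⁻¹) *
            Matrix.diagonal (fun i => d i * d i * ediag i) *
            (Matrix.diagonal (fun i => (d i)⁻¹) * L'ᵀ) := by
          simp only [Matrix.mul_assoc]
  obtain ⟨k, hk_def⟩ : ∃ k : Matrix (Fin n) (Fin n) ℝ, k = y⁻¹ * (x⁻¹ * g) := ⟨_, rfl⟩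
  have hdecomp : g = x * y * k := by
    rw [hk_def, Matrix.mul_assoc, Matrix.mul_nonsing_inv_cancel_left _ _ hdety,
      Matrix.mul_nonsing_inv_cancel_left _ _ hdetx]
  have hdetxT : IsUnit xᵀ.det := by rw [Matrix.det_transpose]; exact hdetx
  have hyT : (y⁻¹)ᵀ = y⁻¹ := by
    rw [Matrix.transpose_nonsing_inv]
    congr 1
    rw [hy_def, Matrix.diagonal_transpose]
  have horth : k * kᵀ = 1 := by
    rw [hk_def]
    simp only [Matrix.transpose_mul, Matrix.mul_assoc]
    rw [hyT, Matrix.transpose_nonsing_inv, ← Matrix.mul_assoc g gᵀ _, hkey]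
    simp only [Matrix.mul_assoc]
    rw [Matrix.mul_nonsing_inv_cancel_left _ _ hdetxT,
      Matrix.mul_nonsing_inv _ hdety, Matrix.mul_one,
      Matrix.nonsing_inv_mul_cancel_left _ _ hdetx,
      Matrix.nonsing_inv_mul _ hdety]
  refine ⟨⟨x, y, k⟩, ⟨hx1, hxut, hypos, hyoff, horth, hdecomp⟩, ?_⟩
  rintro ⟨x', y', k'⟩ ⟨h1, h2, h3, h4, h5, h6⟩
  obtain ⟨e1, e2, e3⟩ :=
    unique_aux h1 h2 h3 h4 h5 hx1 hxut hypos hyoff horth (h6.symm.trans hdecomp)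
  exact Prod.ext e1 (Prod.ext e2 e3)
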